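/- Let G be any group and B a Boolean group. Then the stabilizer of the identity in Ξ_{G×B} is exactly { (g,b) ↦ (φ(g), b) : φ ∈ ξ_G }, where ξ_G is the stabilizer of the identity in Ξ_G. Consequently Ξ_{G×B} ≅ Ξ_G × B. -/

import Mathlib

/-- The group `Ξ_G` of colour-preserving automorphisms of the complete Cayley graph. -/
def Xi (G : Type*) [Group G] : Subgroup (Equiv.Perm G) where
  carrier := {φ | ∀ g h : G, φ (g * h) = φ g * h ∨ φ (g * h) = φ g * h⁻¹}
  one_mem' := fun _ _ => Or.inl rfl
  mul_mem' := by
    intro φ ψ hφ hψ g h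
    simp only [Equiv.Perm.coe_mul, Function.comp_apply]
    rcases hψ g h with h1 | h1 <;> rw [h1]
    · exact hφ (ψ g) h
    · rcases hφ (ψ g) h⁻¹ with h2 | h2 <;> rw [h2] <;> simp [or_comm]
  inv_mem' := by
    intro φ hφ g h
    have key : φ (φ⁻¹ g * h) = g * h ∨ φ (φ⁻¹ g * h) = g * h⁻¹ := by
      simpa using hφ (φ⁻¹ g) h
    have key' : φ (φ⁻¹ g * h⁻¹) = g * h⁻¹ ∨ φ (φ⁻¹ g * h⁻¹) = g * h := by
      rcases hφ (φ⁻¹ g) h⁻¹ with h2 | h2 <;> rw [h2] <;> simp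
    rcases key with h1 | h1
    · left
      have := congrArg (φ⁻¹ : Equiv.Perm G) h1
      simpa using this.symm
    · rcases key' with h2 | h2
      · right
        have h3 : φ (φ⁻¹ g * h) = φ (φ⁻¹ g * h⁻¹) := by rw [h1, h2]
        have hh : h = h⁻¹ := mul_left_cancel (φ.injective h3)
        rw [← hh]
        have h1' : φ (φ⁻¹ g * h) = g * h := by rw [h1, ← hh]
        have := congrArg (φ⁻¹ : Equiv.Perm G) h1'
        simpa using this.symm
      · right
        have := congrArg (φ⁻¹ : Equiv.Perm G) h2
        simpa using this.symm

/-- The stabilizer `ξ_G` of the identity in `Ξ_G`. -/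
def XiStab (G : Type*) [Group G] : Subgroup (Equiv.Perm G) :=
  Xi G ⊓ MulAction.stabilizer (Equiv.Perm G) (1 : G)


section Aux
variable {G B : Type*} [Group G] [Group B]

lemma mem_xi_iff (φ : Equiv.Perm G) :
    φ ∈ Xi G ↔ ∀ g h : G, φ (g * h) = φ g * h ∨ φ (g * h) = φ g * h⁻¹ := Iff.rfl

lemma xi_prod_mem_iff (hB : ∀ b : B, b ^ 2 = 1) (Φ : Equiv.Perm (G × B)) :
    Φ ∈ Xi (G × B) ↔
      ∃ ψ : Equiv.Perm G, ψ ∈ Xi G ∧ ∃ b : B, ∀ p : G × B, Φ p = (ψ p.1, b * p.2) := by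
  have binv : ∀ b : B, b⁻¹ = b := by
    intro b
    have := hB b; rw [pow_two] at this
    exact inv_eq_of_mul_eq_one_right this
  constructor
  · intro hΦ
    set b := (Φ 1).2 with hb
    have snd : ∀ p : G × B, (Φ p).2 = b * p.2 := by
      intro p
      rcases hΦ 1 p with h | h
      · rw [one_mul] at h; rw [h]; rfl
      · rw [one_mul] at h; rw [h]
        show (Φ 1).2 * p.2⁻¹ = b * p.2
        rw [binv]
    have fstind : ∀ g : G, ∀ c : B, (Φ (g, c)).1 = (Φ (g, 1)).1 := by
      intro g c
      rcases hΦ (g, 1) (1, c) with h | h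
      · have : ((g,1) * (1,c) : G × B) = (g, c) := by simp
        rw [this] at h; rw [h]; show (Φ (g,1)).1 * 1 = _; rw [mul_one]
      · have : ((g,1) * (1,c) : G × B) = (g, c) := by simp
        rw [this] at h; rw [h]
        show (Φ (g,1)).1 * (1:G)⁻¹ = _; simp
    set f : G → G := fun g => (Φ (g, 1)).1 with hf
    have finj : Function.Injective f := by
      intro g g' h
      have : Φ (g, 1) = Φ (g', 1) := by
        ext
        · exact h
        · rw [snd, snd]
      exact (Prod.ext_iff.1 (Φ.injective this)).1
    have fsurj : Function.Surjective f := by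
      intro x
      refine ⟨(Φ.symm (x, b)).1, ?_⟩
      have h1 : Φ (Φ.symm (x, b)) = (x, b) := Φ.apply_symm_apply _
      have h2 : (Φ.symm (x, b)).2 = 1 := by
        have := snd (Φ.symm (x, b))
        rw [h1] at this
        exact mul_left_cancel (by rw [← this, mul_one])
      have h3 : f (Φ.symm (x, b)).1 = (Φ ((Φ.symm (x,b)).1, (Φ.symm (x,b)).2)).1 := by
        rw [hf]; exact (fstind _ _).symm
      rw [h3]
      rw [Prod.mk.eta, h1]
    refine ⟨Equiv.ofBijective f ⟨finj, fsurj⟩, ?_, b, ?_⟩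
    · intro g h
      rcases hΦ (g, 1) (h, 1) with h1 | h1
      · left
        have e : ((g,1) * (h,1) : G × B) = (g * h, 1) := by simp
        rw [e] at h1
        have := congrArg Prod.fst h1
        simpa [Equiv.ofBijective_apply, hf] using this
      · right
        have e : ((g,1) * (h,1) : G × B) = (g * h, 1) := by simp
        rw [e] at h1
        have := congrArg Prod.fst h1
        simpa [Equiv.ofBijective_apply, hf] using this
    · intro p
      ext
      · show (Φ p).1 = f p.1
        rw [hf]
        exact (Prod.mk.eta (p := p) ▸ fstind p.1 p.2 : _)
      · exact snd p
  · rintro ⟨ψ, hψ, b, hb⟩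
    intro p q
    rcases hψ p.1 q.1 with h | h
    · left
      rw [hb, hb]
      show (ψ (p.1 * q.1), b * (p.2 * q.2)) = (ψ p.1 * q.1, b * p.2 * q.2)
      rw [h, mul_assoc]
    · right
      rw [hb, hb]
      show (ψ (p.1 * q.1), b * (p.2 * q.2)) = (ψ p.1 * q.1⁻¹, b * p.2 * q.2⁻¹)
      rw [h, mul_assoc, binv]

end Aux

/-- For any group `G` and Boolean group `B`, the stabilizer of the identity in
`Ξ_{G×B}` consists exactly of the maps `(g,b) ↦ (φ g, b)` with `φ ∈ ξ_G`, and
consequently `Ξ_{G×B} ≅ Ξ_G × B`. -/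
theorem xi_prod_boolean {G B : Type*} [Group G] [Group B]
    (hB : ∀ b : B, b ^ 2 = 1) :
    ((XiStab (G × B) : Set (Equiv.Perm (G × B)))
        = {Φ | ∃ φ : Equiv.Perm G, φ ∈ XiStab G ∧ ∀ p : G × B, Φ p = (φ p.1, p.2)}) ∧
      Nonempty ((Xi (G × B)) ≃* (Xi G) × B) := by
  constructor
  · ext Φ
    simp only [Set.mem_setOf_eq, SetLike.mem_coe]
    constructor
    · intro hΦ
      rw [XiStab, Subgroup.mem_inf] at hΦ
      obtain ⟨hΦ1, hΦ2⟩ := hΦ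
      rw [MulAction.mem_stabilizer_iff, Equiv.Perm.smul_def] at hΦ2
      obtain ⟨ψ, hψ, b, hb⟩ := (xi_prod_mem_iff hB Φ).1 hΦ1
      have h1 := hb 1
      rw [hΦ2, Prod.fst_one, Prod.snd_one, mul_one, eq_comm, Prod.mk_eq_one] at h1
      obtain ⟨hψ1, hb1⟩ := h1
      refine ⟨ψ, ?_, fun p => by rw [hb p, hb1, one_mul]⟩
      rw [XiStab, Subgroup.mem_inf]
      exact ⟨hψ, by rw [MulAction.mem_stabilizer_iff, Equiv.Perm.smul_def]; exact hψ1⟩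
    · rintro ⟨φ, hφ, hmap⟩
      rw [XiStab, Subgroup.mem_inf] at hφ ⊢
      obtain ⟨hφ1, hφ2⟩ := hφ
      rw [MulAction.mem_stabilizer_iff, Equiv.Perm.smul_def] at hφ2
      constructor
      · exact (xi_prod_mem_iff hB Φ).2 ⟨φ, hφ1, 1, fun p => by rw [hmap p, one_mul]⟩
      · rw [MulAction.mem_stabilizer_iff, Equiv.Perm.smul_def]
        show Φ (1, 1) = (1, 1)
        rw [hmap (1, 1), hφ2]
  · let J : (Xi G) × B →* Xi (G × B) := MonoidHom.mk'
      (fun x => ⟨Equiv.prodCongr (x.1 : Equiv.Perm G) (Equiv.mulLeft x.2),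
        (xi_prod_mem_iff hB _).2 ⟨(x.1 : Equiv.Perm G), x.1.2, x.2, fun p => rfl⟩⟩)
      (by
        intro x y
        apply Subtype.ext
        apply Equiv.ext
        intro p
        show ((x.1 * y.1 : Equiv.Perm G) p.1, (x.2 * y.2) * p.2)
            = ((x.1 : Equiv.Perm G) ((y.1 : Equiv.Perm G) p.1), x.2 * (y.2 * p.2))
        rw [Equiv.Perm.mul_apply, mul_assoc])
    have hinj : Function.Injective J := by
      intro x y h
      have hpt : ∀ p : G × B,
          ((x.1 : Equiv.Perm G) p.1, x.2 * p.2) = ((y.1 : Equiv.Perm G) p.1, y.2 * p.2) :=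
        fun p => Equiv.ext_iff.1 (Subtype.ext_iff.1 h) p
      have h1 : x.1 = y.1 := by
        apply Subtype.ext; apply Equiv.ext; intro g
        exact (Prod.ext_iff.1 (hpt (g, 1))).1
      have h2 : x.2 = y.2 := by
        have := (Prod.ext_iff.1 (hpt (1, 1))).2
        rwa [mul_one, mul_one] at this
      exact Prod.ext h1 h2
    have hsurj : Function.Surjective J := by
      rintro ⟨Φ, hΦ⟩
      obtain ⟨ψ, hψ, b, hb⟩ := (xi_prod_mem_iff hB Φ).1 hΦ
      exact ⟨(⟨ψ, hψ⟩, b), Subtype.ext (Equiv.ext fun p => (hb p).symm)⟩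
    exact ⟨(MulEquiv.ofBijective J ⟨hinj, hsurj⟩).symm⟩
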